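/- arXiv:1905.11828 — 2 statements merged into one kernel-verified Lean document; each statement's English description precedes it below -/
import Mathlib

section
/- In a pseudo tree, if u is a G-neighbor of v with u ∈ Desc(v) and u ∉ ID(v), then v is the highest neighbor-ancestor of u: v ∈ AP(u) and v is an ancestor of every other element of AP(u). (Correctness of the elimination site in generalized non-local elimination: a (pseudo) child of v not in ID(v) is eliminated exactly at v.) -/
/-- `anc par u v` : `u` is an ancestor of `v` in the rooted tree with parent map `par`,
i.e. `(u, v)` lies in the transitive closure of `{(p, c) : par c = some p}`. -/
def anc {V : Type*} (par : V → Option V) (u v : V) : Prop :=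
  Relation.TransGen (fun p c => par c = some p) u v

/-- `desc par v` : the set of descendants of `v`. -/
def desc {V : Type*} (par : V → Option V) (v : V) : Set V := {u | anc par v u}

/-- `children par v` : the set of (tree) children of `v`. -/
def children {V : Type*} (par : V → Option V) (v : V) : Set V := {u | par u = some v}

/-- `apSet par G v` : the (pseudo) parents of `v`, i.e. the G-neighbors of `v`
that are ancestors of `v`. -/
def apSet {V : Type*} (par : V → Option V) (G : SimpleGraph V) (v : V) : Set V :=
  {u | G.Adj u v ∧ anc par u v}

/-- `pcSet par G v` : the pseudo children of `v`, i.e. descendants of `v` that are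
G-neighbors of `v` but whose parent is not `v`. -/
def pcSet {V : Type*} (par : V → Option V) (G : SimpleGraph V) (v : V) : Set V :=
  {u | u ∈ desc par v ∧ G.Adj u v ∧ par u ≠ some v}

/-- `sepSet par G v` : the separator of `v`, i.e. the ancestors of `v` that are
G-adjacent to `v` or to some descendant of `v`. -/
def sepSet {V : Type*} (par : V → Option V) (G : SimpleGraph V) (v : V) : Set V :=
  {u | anc par u v ∧ (G.Adj u v ∨ ∃ w ∈ desc par v, G.Adj u w)}

/-- `idSet par G v` : the interface descendants of `v`, i.e. the descendants of `v`
that are G-adjacent to some element of the separator of `v`. -/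
def idSet {V : Type*} (par : V → Option V) (G : SimpleGraph V) (v : V) : Set V :=
  {u | u ∈ desc par v ∧ ∃ w ∈ sepSet par G v, G.Adj u w}

/-- `evSet par G v c` : the elimination set `EV(v, c) = ((PC(v) ∩ Desc(c)) ∪ {c}) \ ID(v)`. -/
def evSet {V : Type*} (par : V → Option V) (G : SimpleGraph V) (v c : V) : Set V :=
  ((pcSet par G v ∩ desc par c) ∪ {c}) \ idSet par G v

lemma anc_comparable {V : Type*} (par : V → Option V) {u a b : V}
    (ha : anc par a u) (hb : anc par b u) : a = b ∨ anc par a b ∨ anc par b a := by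
  induction ha with
  | single h =>
    cases hb with
    | single h' => left; exact (Option.some.inj (h'.symm.trans h)).symm
    | tail hb' h' =>
      right; right
      have := Option.some.inj (h'.symm.trans h)
      rwa [this] at hb'
  | tail ha' h ih =>
    cases hb with
    | single h' =>
      right; left
      have := Option.some.inj (h.symm.trans h')
      exact this ▸ ha'
    | tail hb' h' =>
      have := Option.some.inj (h'.symm.trans h)
      rw [this] at hb'
      exact ih hb'


/-- In a pseudo tree, if `u` is a G-neighbor of `v` with `u ∈ Desc(v)` and `u ∉ ID(v)`,
then `v` is the highest neighbor-ancestor of `u`: `v ∈ AP(u)` and `v` is an ancestor of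
every other element of `AP(u)`. -/
theorem highest_neighbor_ancestor_of_not_interface {V : Type*} [Fintype V] (r : V)
    (par : V → Option V) (G : SimpleGraph V)
    (hroot : par r = none) (hne : ∀ v : V, v ≠ r → par v ≠ none)
    (hconn : ∀ v : V, v ≠ r → anc par r v)
    (hPT : ∀ u v : V, G.Adj u v → anc par u v ∨ anc par v u)
    (v u : V) (hadj : G.Adj u v) (hu : u ∈ desc par v) (hnid : u ∉ idSet par G v) :
    v ∈ apSet par G u ∧ ∀ w ∈ apSet par G u, w ≠ v → anc par v w := by
  constructor
  · exact ⟨hadj.symm, hu⟩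
  · intro w hw hwv
    obtain ⟨hwadj, hwanc⟩ := hw
    rcases anc_comparable par hwanc hu with h | h | h
    · exact absurd h hwv
    · exact absurd hnid (not_not.mpr ⟨hu, w, ⟨h, Or.inr ⟨u, hu, hwadj⟩⟩, hwadj.symm⟩)
    · exact h
end

section
/- In a pseudo tree in which every tree edge is a graph edge, for every non-root vertex u there exists exactly one pair (v, c) with c ∈ C(v) and u ∈ EV(v, c); namely v = h(u) is the highest neighbor-ancestor of u, and c is the unique child of v with u ∈ {c} ∪ Desc(c). (Hence in generalized non-local elimination every variable is eliminated exactly once, at its highest (pseudo) parent, in the branch containing it.) -/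
lemma anc_comp {V : Type*} {par : V → Option V} {a v : V} (ha : anc par a v) :
    ∀ b, anc par b v → a = b ∨ anc par a b ∨ anc par b a := by
  induction ha with
  | @single w h =>
    intro b hb
    rcases (Relation.transGen_iff _ _ _).mp hb with h' | ⟨m, hbm, h'⟩
    · rw [h] at h'; exact Or.inl (Option.some_inj.mp h')
    · rw [h] at h'
      obtain rfl : a = m := Option.some_inj.mp h'
      exact Or.inr (Or.inr hbm)
  | @tail p q hab hbv ih =>
    intro b' hb'
    rcases (Relation.transGen_iff _ _ _).mp hb' with h' | ⟨m, hbm, h'⟩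
    · rw [hbv] at h'
      obtain rfl : p = b' := Option.some_inj.mp h'
      exact Or.inr (Or.inl hab)
    · rw [hbv] at h'
      obtain rfl : p = m := Option.some_inj.mp h'
      exact ih b' hbm

lemma anc_iter {V : Type*} {par : V → Option V} {u v : V} (h : anc par u v) :
    ∃ k, (fun o : Option V => o.bind par)^[k + 1] (some v) = some u := by
  induction h with
  | single h => exact ⟨0, by simpa using h⟩
  | tail hab hbv ih =>
    obtain ⟨k, hk⟩ := ih
    refine ⟨k + 1, ?_⟩
    rw [Function.iterate_add_apply _ (k + 1) 1]
    simpa [hbv] using hk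

lemma anc_irrefl {V : Type*} {r : V} {par : V → Option V}
    (hroot : par r = none) (hconn : ∀ v, v ≠ r → anc par r v) (v : V) :
    ¬ anc par v v := by
  intro hvv
  set f : Option V → Option V := fun o => o.bind par with hf
  have hnone : ∀ k, f^[k] none = none := by
    intro k; induction k with
    | zero => rfl
    | succ k ih => rw [Function.iterate_succ_apply, show f none = none from rfl, ih]
  by_cases hvr : v = r
  · subst hvr
    rcases (Relation.transGen_iff _ _ _).mp hvv with h' | ⟨m, _, h'⟩ <;>
      simp [hroot] at h'
  · obtain ⟨n, hn⟩ := anc_iter hvv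
    obtain ⟨m, hm⟩ := anc_iter (hconn v hvr)
    have hper : ∀ k, f^[k * (n + 1)] (some v) = some v := by
      intro k; induction k with
      | zero => simp
      | succ k ih =>
        rw [Nat.succ_mul, Function.iterate_add_apply, hn, ih]
    have hr1 : ∀ j, f^[j + 1] (some r) = none := by
      intro j
      rw [Function.iterate_succ_apply, show f (some r) = none by simp [hf, hroot], hnone]
    have hle : m + 2 ≤ (m + 2) * (n + 1) := Nat.le_mul_of_pos_right _ (Nat.succ_pos n)
    have harith : (m + 2) * (n + 1) = (((m + 2) * (n + 1) - (m + 2)) + 1) + (m + 1) := by omega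
    have := hper (m + 2)
    rw [harith, Function.iterate_add_apply, hm, hr1] at this
    exact Option.some_ne_none v this.symm

lemma anc_nostep {V : Type*} {par : V → Option V}
    (irr : ∀ w : V, ¬ anc par w w) {x y z : V}
    (hx : par x = some z) (hy : par y = some z) (hxy : anc par x y) : False := by
  rcases (Relation.transGen_iff _ _ _).mp hxy with h' | ⟨m, hxm, h'⟩
  · rw [hy] at h'
    obtain rfl : z = x := Option.some_inj.mp h'
    exact irr z (Relation.TransGen.single hx)
  · rw [hy] at h'
    obtain rfl : z = m := Option.some_inj.mp h'
    exact irr x (hxm.trans (Relation.TransGen.single hx))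

/-- In a pseudo tree in which every tree edge is a graph edge, for every non-root vertex
`u` there is exactly one pair `(v, c)` with `c ∈ C(v)` and `u ∈ EV(v, c)`; namely
`v = h(u)` is the highest neighbor-ancestor of `u` and `c` is the unique child of `v`
with `u ∈ {c} ∪ Desc(c)`. -/
theorem eliminated_exactly_once {V : Type*} [Fintype V] (r : V)
    (par : V → Option V) (G : SimpleGraph V)
    (hroot : par r = none) (hne : ∀ v : V, v ≠ r → par v ≠ none)
    (hconn : ∀ v : V, v ≠ r → anc par r v)
    (hPT : ∀ u v : V, G.Adj u v → anc par u v ∨ anc par v u)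
    (hTE : ∀ v p : V, par v = some p → G.Adj v p)
    (u : V) (hu : u ≠ r)
    (h : V) (hh : h ∈ apSet par G u)
    (hhigh : ∀ w ∈ apSet par G u, w ≠ h → anc par h w) :
    (∃! p : V × V, p.2 ∈ children par p.1 ∧ u ∈ evSet par G p.1 p.2) ∧
    (∀ v c : V, c ∈ children par v → u ∈ evSet par G v c →
      v = h ∧ u ∈ ({c} : Set V) ∪ desc par c ∧
        ∀ c' ∈ children par v, u ∈ ({c'} : Set V) ∪ desc par c' → c' = c) := by
  have irr : ∀ w : V, ¬ anc par w w := anc_irrefl hroot hconn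
  have antisym : ∀ a b : V, anc par a b → anc par b a → False :=
    fun a b h1 h2 => irr a (h1.trans h2)
  obtain ⟨hadj, hanc⟩ := hh
  -- extract the child `c` of `h` towards `u`
  obtain ⟨c, hc, hcu'⟩ := Relation.TransGen.head'_iff.mp hanc
  have hcase : u = c ∨ anc par c u := by
    rcases Relation.reflTransGen_iff_eq_or_transGen.mp hcu' with h' | h'
    · exact Or.inl h'
    · exact Or.inr h'
  -- `u` is not an interface descendant of `h`
  have hnid : u ∉ idSet par G h := by
    rintro ⟨hud, w, ⟨hwh, -⟩, hadjuw⟩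
    have hwu : anc par w u := hwh.trans hanc
    have hwne : w ≠ h := fun e => irr h (e ▸ hwh)
    exact antisym h w (hhigh w ⟨hadjuw.symm, hwu⟩ hwne) hwh
  -- existence: `u ∈ evSet h c`
  have hmem : u ∈ evSet par G h c := by
    refine ⟨?_, hnid⟩
    rcases hcase with rfl | hcu
    · exact Or.inr rfl
    · refine Or.inl ⟨⟨hanc, hadj.symm, ?_⟩, hcu⟩
      intro hpar
      exact anc_nostep irr hc hpar hcu
  -- the key characterization: any valid (v, c') has v = h
  have key : ∀ v c' : V, c' ∈ children par v → u ∈ evSet par G v c' →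
      v = h ∧ (u = c' ∨ anc par c' u) := by
    rintro v c' hc' ⟨hmemv, hnid'⟩
    have hc'' : par c' = some v := hc'
    have hvu : anc par v u ∧ G.Adj u v := by
      rcases hmemv with ⟨⟨hdesc, hadj', _⟩, _⟩ | rfl
      · exact ⟨hdesc, hadj'⟩
      · exact ⟨Relation.TransGen.single hc'', hTE u v hc''⟩
    have hveq : v = h := by
      by_contra hvne
      have hhv : anc par h v := hhigh v ⟨hvu.2.symm, hvu.1⟩ hvne
      exact hnid' ⟨hvu.1, h, ⟨hhv, Or.inr ⟨u, hvu.1, hadj⟩⟩, hadj.symm⟩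
    refine ⟨hveq, ?_⟩
    rcases hmemv with ⟨⟨_, _, _⟩, hdc⟩ | rfl
    · exact Or.inr hdc
    · exact Or.inl rfl
  -- uniqueness of the child
  have cuniq : ∀ v c1 c2 : V, par c1 = some v → par c2 = some v →
      (u = c1 ∨ anc par c1 u) → (u = c2 ∨ anc par c2 u) → c1 = c2 := by
    intro v c1 c2 h1 h2 k1 k2
    rcases k1 with rfl | k1
    · rcases k2 with rfl | k2
      · rfl
      · exact absurd (anc_nostep irr h2 h1 k2) id
    · rcases k2 with rfl | k2
      · exact absurd (anc_nostep irr h1 h2 k1) id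
      · rcases anc_comp k1 c2 k2 with h' | h' | h'
        · exact h'
        · exact absurd (anc_nostep irr h1 h2 h') id
        · exact absurd (anc_nostep irr h2 h1 h') id
  constructor
  · refine ⟨(h, c), ⟨hc, hmem⟩, ?_⟩
    rintro ⟨v, c'⟩ ⟨hc', hmem'⟩
    obtain ⟨hveq, hcase'⟩ := key v c' hc' hmem'
    subst hveq
    have : c' = c := cuniq v c' c hc' hc hcase' hcase
    simp [this]
  · intro v c' hc' hmem'
    obtain ⟨hveq, hcase'⟩ := key v c' hc' hmem'
    subst hveq
    refine ⟨rfl, ?_, ?_⟩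
    · rcases hcase' with rfl | h'
      · exact Or.inl rfl
      · exact Or.inr h'
    · intro c'' hc'' hmem''
      have hcase'' : u = c'' ∨ anc par c'' u := by
        rcases hmem'' with h' | h'
        · exact Or.inl h'
        · exact Or.inr h'
      exact cuniq v c'' c' hc'' hc' hcase'' hcase'
end
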